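/- Let r ≥ 0 be an even integer, N ≥ 3 an odd integer, k ≥ 0 an integer with gcd(2k+1, N) = 1, and set α = (2k+1)·π/N. Define σ(α, x) = (sin(α·x)/(α·x))^{1+r} for x > 0. Then for all integers m ≥ 1 and 1 ≤ j ≤ (N−1)/2, one has σ(α, m·N + j)/σ(α, j) = (−1)^m·(j/(m·N + j))^{1+r} and σ(α, m·N − j)/σ(α, j) = (−1)^{m+1}·(j/(m·N − j))^{1+r}; in particular these ratios do not depend on k. -/

import Mathlib

open Real

/-- For even degree `r`, odd `N ≥ 3`, `gcd(2k+1, N) = 1` and `α = (2k+1)π/N`, the ratios of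
the sign-changing convergence factor `σ(α,x) = (sin(αx)/(αx))^{1+r}` at frequencies `mN ± j`
to its value at frequency `j` are `(-1)^m (j/(mN+j))^{1+r}` and `(-1)^{m+1} (j/(mN-j))^{1+r}`,
independent of `k`. -/
theorem sigma_ratio_even_degree
    (r N k : ℕ) (hreven : Even r) (hN : 3 ≤ N) (hNodd : Odd N)
    (hkN : Nat.gcd (2 * k + 1) N = 1)
    (α : ℝ) (hα : α = ((2 * k + 1 : ℕ) : ℝ) * π / N)
    (σ : ℝ → ℝ) (hσ : ∀ x : ℝ, 0 < x → σ x = (Real.sin (α * x) / (α * x)) ^ (1 + r)) :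
    ∀ m : ℕ, 1 ≤ m → ∀ j : ℕ, 1 ≤ j → j ≤ (N - 1) / 2 →
      σ ((m : ℝ) * N + j) / σ j = (-1 : ℝ) ^ m * ((j : ℝ) / ((m : ℝ) * N + j)) ^ (1 + r) ∧
      σ ((m : ℝ) * N - j) / σ j =
        (-1 : ℝ) ^ (m + 1) * ((j : ℝ) / ((m : ℝ) * N - j)) ^ (1 + r) := by
  intro m hm j hj1 hj2
  have hjN : j < N := by omega
  have hNpos : (0:ℝ) < N := by positivity
  have hjpos : (0:ℝ) < j := by exact_mod_cast hj1
  have hjNR : (j:ℝ) < N := by exact_mod_cast hjN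
  have hmR : (1:ℝ) ≤ m := by exact_mod_cast hm
  have hαpos : 0 < α := by
    rw [hα]
    have : (0:ℝ) < ((2 * k + 1 : ℕ) : ℝ) := by positivity
    positivity
  have hαN : α * N = ((2 * k + 1 : ℕ) : ℝ) * π := by
    rw [hα]; field_simp
  -- positivity of frequencies
  have hp1 : (0:ℝ) < (m : ℝ) * N + j := by positivity
  have hp2 : (0:ℝ) < (m : ℝ) * N - j := by nlinarith
  -- sin(α j) ≠ 0
  have hs : Real.sin (α * j) ≠ 0 := by
    intro h
    obtain ⟨n, hn⟩ := Real.sin_eq_zero_iff.1 h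
    rw [hα] at hn
    have hπ : π ≠ 0 := Real.pi_ne_zero
    have hNne : (N:ℝ) ≠ 0 := ne_of_gt hNpos
    have hZ : ((2 * k + 1 : ℕ) : ℝ) * (j:ℝ) = (n:ℝ) * N := by
      field_simp at hn
      refine mul_right_cancel₀ hπ ?_
      push_cast at hn ⊢
      linear_combination (-π) * hn
    have hZ' : ((2 * k + 1 : ℕ) : ℤ) * (j:ℤ) = n * N := by exact_mod_cast hZ
    have hdvd : (N:ℤ) ∣ ((2 * k + 1 : ℕ) : ℤ) * (j:ℤ) := ⟨n, by linarith [hZ']⟩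
    have hcop : IsCoprime ((N:ℕ):ℤ) ((2 * k + 1 : ℕ):ℤ) := by
      rw [Int.isCoprime_iff_gcd_eq_one, Int.gcd_natCast_natCast, Nat.gcd_comm]
      exact hkN
    have : (N:ℤ) ∣ (j:ℤ) := (IsCoprime.dvd_of_dvd_mul_left hcop hdvd)
    have : N ∣ j := by exact_mod_cast this
    have := Nat.le_of_dvd (by omega) this
    omega
  -- sine values at shifted frequencies
  have hparity : ((-1:ℝ)) ^ ((2 * k + 1) * m) = (-1:ℝ) ^ m := by
    rw [pow_mul, Odd.neg_one_pow ⟨k, by ring⟩]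
  have hsin1 : Real.sin (α * ((m : ℝ) * N + j)) = (-1:ℝ) ^ m * Real.sin (α * j) := by
    have : α * ((m : ℝ) * N + j) = α * j + ((2 * k + 1) * m : ℕ) * π := by
      push_cast
      push_cast at hαN
      linear_combination (m : ℝ) * hαN
    rw [this, Real.sin_add_nat_mul_pi, hparity]
  have hsin2 : Real.sin (α * ((m : ℝ) * N - j)) = (-1:ℝ) ^ (m + 1) * Real.sin (α * j) := by
    have : α * ((m : ℝ) * N - j) = ((2 * k + 1) * m : ℕ) * π - α * j := by
      push_cast
      push_cast at hαN
      linear_combination (m : ℝ) * hαN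
    rw [this, Real.sin_nat_mul_pi_sub, hparity, pow_succ]
    ring
  have hodd : Odd (1 + r) := by
    obtain ⟨t, ht⟩ := hreven
    exact ⟨t, by omega⟩
  have hαne : α ≠ 0 := ne_of_gt hαpos
  have hjne : (j:ℝ) ≠ 0 := ne_of_gt hjpos
  have signpow : ∀ s : ℕ, ∀ x : ℝ, ((-1:ℝ) ^ s * x) ^ (1 + r) = (-1:ℝ) ^ s * x ^ (1 + r) := by
    intro s x
    rw [mul_pow, ← pow_mul, mul_comm s (1 + r), pow_mul, Odd.neg_one_pow hodd]
  constructor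
  · rw [hσ _ hp1, hσ _ hjpos, ← div_pow]
    have : Real.sin (α * ((m : ℝ) * N + j)) / (α * ((m : ℝ) * N + j)) /
        (Real.sin (α * j) / (α * j)) = (-1:ℝ) ^ m * ((j : ℝ) / ((m : ℝ) * N + j)) := by
      rw [hsin1]
      field_simp
    rw [this, signpow]
  · rw [hσ _ hp2, hσ _ hjpos, ← div_pow]
    have : Real.sin (α * ((m : ℝ) * N - j)) / (α * ((m : ℝ) * N - j)) /
        (Real.sin (α * j) / (α * j)) = (-1:ℝ) ^ (m + 1) * ((j : ℝ) / ((m : ℝ) * N - j)) := by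
      rw [hsin2]
      field_simp
    rw [this, signpow]
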